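/- There exists a universal constant C > 0 such that for every n ≥ 1 and every log-concave probability measure μ on ℝⁿ, ∫_{ℝⁿ} ‖x‖⁴ dμ(x) ≤ C ( ∫_{ℝⁿ} ‖x‖² dμ(x) )². -/

import Mathlib

open MeasureTheory ENNReal Set
open scoped Pointwise

lemma ennreal_add_le_of_forall_lt {a b c : ℝ≥0∞}
    (ha : ∀ x < a, x ≤ c) (hb : ∀ y < b, y ≤ c)
    (h : ∀ x < a, ∀ y < b, x + y ≤ c) : a + b ≤ c := by
  refine le_of_forall_lt_imp_le_of_dense fun d hd => ?_
  rcases eq_or_ne a 0 with rfl | ha0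
  · exact hb d (by simpa using hd)
  rcases eq_or_ne b 0 with rfl | hb0
  · exact ha d (by simpa using hd)
  obtain ⟨x, hx, y, hy, hd'⟩ := ENNReal.exists_lt_add_of_lt_add hd ha0 hb0
  exact hd'.le.trans (h x hx y hy)

lemma BM1d_compact {K L : Set ℝ} (hK : IsCompact K) (hL : IsCompact L)
    (hKne : K.Nonempty) (hLne : L.Nonempty) :
    volume K + volume L ≤ volume (K + L) := by
  obtain ⟨a, haK, ha⟩ := hK.exists_isGreatest hKne
  obtain ⟨b, hbL, hb⟩ := hL.exists_isLeast hLne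
  set X : Set ℝ := (fun x => x + b) '' K with hX
  set Y : Set ℝ := (fun y => a + y) '' L with hY
  have hXK : volume X = volume K := by
    rw [hX, image_add_right]; exact measure_preimage_add_right volume (-b) K
  have hYL : volume Y = volume L := by
    rw [hY, image_add_left]; exact measure_preimage_add volume (-a) L
  have hXsub : X ⊆ K + L := by
    rintro _ ⟨k, hk, rfl⟩; exact add_mem_add hk hbL
  have hYsub : Y ⊆ K + L := by
    rintro _ ⟨lq, hlq, rfl⟩; exact add_mem_add haK hlq
  have hint : X ∩ Y ⊆ {a + b} := by
    rintro z ⟨⟨k, hk, rfl⟩, ⟨m, hm, hz⟩⟩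
    have hz' : a + m = k + b := hz
    have h1 : k ≤ a := ha hk
    have h2 : b ≤ m := hb hm
    have : k + b = a + b := by linarith
    simp [this]
  have hintvol : volume (X ∩ Y) = 0 :=
    measure_mono_null hint (measure_singleton _)
  have hmeasY : MeasurableSet Y := ((hL.image (continuous_add_left a))).measurableSet
  calc volume K + volume L = volume X + volume Y := by rw [hXK, hYL]
    _ = volume (X ∪ Y) + volume (X ∩ Y) := (measure_union_add_inter X hmeasY).symm
    _ = volume (X ∪ Y) := by rw [hintvol, add_zero]
    _ ≤ volume (K + L) := measure_mono (union_subset hXsub hYsub)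

lemma combo_measure_le {l : ℝ} (hl0 : 0 < l) (hl1 : l < 1) {A B C : Set ℝ}
    (hA : MeasurableSet A) (hB : MeasurableSet B) (hC : MeasurableSet C)
    (hAne : A.Nonempty) (hBne : B.Nonempty)
    (h : ∀ x ∈ A, ∀ y ∈ B, l * x + (1 - l) * y ∈ C) :
    ENNReal.ofReal l * volume A + ENNReal.ofReal (1 - l) * volume B ≤ volume C := by
  have key : ∀ K ⊆ A, ∀ L ⊆ B, IsCompact K → IsCompact L → K.Nonempty → L.Nonempty →
      ENNReal.ofReal l * volume K + ENNReal.ofReal (1 - l) * volume L ≤ volume C := by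
    intro K hKA L hLB hK hL hKne hLne
    have hsub : l • K + (1 - l) • L ⊆ C := by
      rintro _ ⟨_, ⟨x, hx, rfl⟩, _, ⟨y, hy, rfl⟩, rfl⟩
      exact h x (hKA hx) y (hLB hy)
    have h1 : volume (l • K) = ENNReal.ofReal l * volume K := by
      rw [Measure.addHaar_smul]
      simp [abs_of_pos hl0, ENNReal.ofReal]
    have h2 : volume ((1 - l) • L) = ENNReal.ofReal (1 - l) * volume L := by
      rw [Measure.addHaar_smul]
      simp [abs_of_pos (by linarith : (0:ℝ) < 1 - l), ENNReal.ofReal]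
    calc ENNReal.ofReal l * volume K + ENNReal.ofReal (1 - l) * volume L
        = volume (l • K) + volume ((1 - l) • L) := by rw [h1, h2]
      _ ≤ volume (l • K + (1 - l) • L) :=
          BM1d_compact (hK.smul l) (hL.smul (1 - l)) hKne.smul_set hLne.smul_set
      _ ≤ volume C := measure_mono hsub
  obtain ⟨a₀, ha₀⟩ := hAne
  obtain ⟨b₀, hb₀⟩ := hBne
  have getK : ∀ x < ENNReal.ofReal l * volume A,
      ∃ K, K ⊆ A ∧ IsCompact K ∧ K.Nonempty ∧ x ≤ ENNReal.ofReal l * volume K := by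
    intro x hx
    have hrw : ENNReal.ofReal l * volume A
        = ⨆ (K : Set ℝ) (_ : K ⊆ A) (_ : IsCompact K), ENNReal.ofReal l * volume K := by
      rw [hA.measure_eq_iSup_isCompact]
      simp_rw [ENNReal.mul_iSup]
    rw [hrw] at hx
    simp only [lt_iSup_iff] at hx
    obtain ⟨K, hKA, hKc, hxK⟩ := hx
    refine ⟨K ∪ {a₀}, union_subset hKA (by simpa using ha₀), hKc.union isCompact_singleton,
      ⟨a₀, by simp⟩, hxK.le.trans ?_⟩
    exact mul_le_mul_right (measure_mono subset_union_left) _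
  have getL : ∀ y < ENNReal.ofReal (1 - l) * volume B,
      ∃ L, L ⊆ B ∧ IsCompact L ∧ L.Nonempty ∧ y ≤ ENNReal.ofReal (1 - l) * volume L := by
    intro y hy
    have hrw : ENNReal.ofReal (1 - l) * volume B
        = ⨆ (L : Set ℝ) (_ : L ⊆ B) (_ : IsCompact L), ENNReal.ofReal (1 - l) * volume L := by
      rw [hB.measure_eq_iSup_isCompact]
      simp_rw [ENNReal.mul_iSup]
    rw [hrw] at hy
    simp only [lt_iSup_iff] at hy
    obtain ⟨L, hLB, hLc, hyL⟩ := hy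
    refine ⟨L ∪ {b₀}, union_subset hLB (by simpa using hb₀), hLc.union isCompact_singleton,
      ⟨b₀, by simp⟩, hyL.le.trans ?_⟩
    exact mul_le_mul_right (measure_mono subset_union_left) _
  refine ennreal_add_le_of_forall_lt ?_ ?_ ?_
  · intro x hx
    obtain ⟨K, hKA, hKc, hKne, hxK⟩ := getK x hx
    refine hxK.trans (le_trans (le_add_right le_rfl) (key K hKA {b₀} (by simpa using hb₀)
      hKc isCompact_singleton hKne ⟨b₀, rfl⟩))
  · intro y hy
    obtain ⟨L, hLB, hLc, hLne, hyL⟩ := getL y hy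
    refine hyL.trans (le_trans (le_add_left le_rfl) (key {a₀} (by simpa using ha₀) L hLB
      isCompact_singleton hLc ⟨a₀, rfl⟩ hLne))
  · intro x hx y hy
    obtain ⟨K, hKA, hKc, hKne, hxK⟩ := getK x hx
    obtain ⟨L, hLB, hLc, hLne, hyL⟩ := getL y hy
    exact (add_le_add hxK hyL).trans (key K hKA L hLB hKc hLc hKne hLne)

section PLcore
open Filter

lemma ennreal_geom_mean_le {l : ℝ} (hl0 : 0 < l) (hl1 : l < 1) (a b : ℝ≥0∞) :
    a ^ l * b ^ (1 - l) ≤ ENNReal.ofReal l * a + ENNReal.ofReal (1 - l) * b := by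
  rcases eq_or_ne a ∞ with rfl | ha
  · have : ENNReal.ofReal l * ∞ = ∞ := ENNReal.mul_top (by simp [hl0])
    rw [this, top_add]; exact le_top
  rcases eq_or_ne b ∞ with rfl | hb
  · have : ENNReal.ofReal (1 - l) * ∞ = ∞ :=
      ENNReal.mul_top (by simp [sub_pos.2 hl1, ne_of_gt])
    rw [this, add_top]; exact le_top
  have h := Real.geom_mean_le_arith_mean2_weighted hl0.le (by linarith : (0:ℝ) ≤ 1 - l)
    a.toReal_nonneg b.toReal_nonneg (by ring)
  calc a ^ l * b ^ (1 - l)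
      = ENNReal.ofReal (a.toReal ^ l * b.toReal ^ (1 - l)) := by
        rw [ENNReal.ofReal_mul (Real.rpow_nonneg a.toReal_nonneg l),
          ← ENNReal.ofReal_rpow_of_nonneg a.toReal_nonneg hl0.le,
          ← ENNReal.ofReal_rpow_of_nonneg b.toReal_nonneg (by linarith),
          ENNReal.ofReal_toReal ha, ENNReal.ofReal_toReal hb]
    _ ≤ ENNReal.ofReal (l * a.toReal + (1 - l) * b.toReal) := ENNReal.ofReal_le_ofReal h
    _ = ENNReal.ofReal l * a + ENNReal.ofReal (1 - l) * b := by
        rw [ENNReal.ofReal_add (by positivity) (mul_nonneg (by linarith) b.toReal_nonneg),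
          ENNReal.ofReal_mul hl0.le, ENNReal.ofReal_mul (by linarith),
          ENNReal.ofReal_toReal ha, ENNReal.ofReal_toReal hb]

lemma lintegral_cap_layercake {f : ℝ → ℝ≥0∞} (hf : Measurable f) :
    (∫⁻ x, min (f x) 1) = ∫⁻ t in Ioi (0:ℝ), volume {a | ENNReal.ofReal t < f a ∧ t < 1} := by
  set F : ℝ → ℝ := fun x => (min (f x) 1).toReal with hF
  have hFm : Measurable F := (hf.min measurable_const).ennreal_toReal
  have h1 : ∀ x, min (f x) 1 ≠ ∞ := fun x => ne_top_of_le_ne_top one_ne_top (min_le_right _ _)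
  have e1 : (∫⁻ x, min (f x) 1) = ∫⁻ x, ENNReal.ofReal (F x) := by
    refine lintegral_congr fun x => ?_
    rw [hF]; exact (ENNReal.ofReal_toReal (h1 x)).symm
  rw [e1, lintegral_eq_lintegral_meas_lt volume (ae_of_all _ fun x => ENNReal.toReal_nonneg)
    hFm.aemeasurable]
  refine setLIntegral_congr_fun measurableSet_Ioi fun t ht => ?_
  congr 1
  ext a
  simp only [mem_setOf_eq, hF]
  rw [← ENNReal.ofReal_lt_iff_lt_toReal (le_of_lt ht) (h1 a), lt_min_iff,
    ENNReal.ofReal_lt_one]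

lemma PL_core {l : ℝ} (hl0 : 0 < l) (hl1 : l < 1) {f g h : ℝ → ℝ≥0∞}
    (hf : Measurable f) (hg : Measurable g) (hh : Measurable h)
    (hef : essSup f volume = 1) (heg : essSup g volume = 1)
    (hyp : ∀ x y, f x ^ l * g y ^ (1 - l) ≤ h (l * x + (1 - l) * y)) :
    ENNReal.ofReal l * (∫⁻ x, f x) + ENNReal.ofReal (1 - l) * (∫⁻ x, g x) ≤ ∫⁻ x, h x := by
  have hl1' : (0:ℝ) < 1 - l := by linarith
  have hfae : ∀ᵐ x, f x ≤ 1 := hef ▸ ae_le_essSup f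
  have hgae : ∀ᵐ x, g x ≤ 1 := heg ▸ ae_le_essSup g
  have ef : (∫⁻ x, f x) = ∫⁻ x, min (f x) 1 :=
    lintegral_congr_ae (hfae.mono fun x hx => (min_eq_left hx).symm)
  have eg : (∫⁻ x, g x) = ∫⁻ x, min (g x) 1 :=
    lintegral_congr_ae (hgae.mono fun x hx => (min_eq_left hx).symm)
  have eh : (∫⁻ x, min (h x) 1) ≤ ∫⁻ x, h x := lintegral_mono fun x => min_le_left _ _
  set A : ℝ → ℝ≥0∞ := fun t => volume {a | ENNReal.ofReal t < f a ∧ t < 1} with hA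
  set B : ℝ → ℝ≥0∞ := fun t => volume {a | ENNReal.ofReal t < g a ∧ t < 1} with hB
  set C : ℝ → ℝ≥0∞ := fun t => volume {a | ENNReal.ofReal t < h a ∧ t < 1} with hC
  have key : ∀ t ∈ Ioi (0:ℝ),
      ENNReal.ofReal l * A t + ENNReal.ofReal (1 - l) * B t ≤ C t := by
    intro t ht
    have ht0 : (0:ℝ) < t := mem_Ioi.mp ht
    rcases lt_or_ge t 1 with ht1 | ht1
    · set T := ENNReal.ofReal t with hT
      have hT0 : T ≠ 0 := by simpa [hT] using (ENNReal.ofReal_pos.2 ht0).ne'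
      have hTtop : T ≠ ∞ := ENNReal.ofReal_ne_top
      have hAeq : {a | ENNReal.ofReal t < f a ∧ t < 1} = {a | T < f a} := by
        ext a; simp [ht1, hT]
      have hBeq : {a | ENNReal.ofReal t < g a ∧ t < 1} = {a | T < g a} := by
        ext a; simp [ht1, hT]
      have hCeq : {a | ENNReal.ofReal t < h a ∧ t < 1} = {a | T < h a} := by
        ext a; simp [ht1, hT]
      rw [hA, hB, hC]
      simp only [hAeq, hBeq, hCeq]
      have hAmeas : MeasurableSet {a | T < f a} := hf measurableSet_Ioi
      have hBmeas : MeasurableSet {a | T < g a} := hg measurableSet_Ioi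
      have hCmeas : MeasurableSet {a | T < h a} := hh measurableSet_Ioi
      have hAne : {a | T < f a}.Nonempty := by
        refine nonempty_of_measure_ne_zero (μ := volume) fun h0 => ?_
        have haez : ∀ᵐ x, f x ≤ T := by
          rw [ae_iff]; simpa [not_le] using h0
        have hle := essSup_le_of_ae_le (μ := volume) T haez
        rw [hef] at hle
        exact absurd (lt_of_le_of_lt hle (by simpa [hT] using ENNReal.ofReal_lt_one.2 ht1))
          (lt_irrefl _)
      have hBne : {a | T < g a}.Nonempty := by
        refine nonempty_of_measure_ne_zero (μ := volume) fun h0 => ?_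
        have haez : ∀ᵐ x, g x ≤ T := by
          rw [ae_iff]; simpa [not_le] using h0
        have hle := essSup_le_of_ae_le (μ := volume) T haez
        rw [heg] at hle
        exact absurd (lt_of_le_of_lt hle (by simpa [hT] using ENNReal.ofReal_lt_one.2 ht1))
          (lt_irrefl _)
      refine combo_measure_le hl0 hl1 hAmeas hBmeas hCmeas hAne hBne ?_
      intro x hx y hy
      have hTsplit : T = T ^ l * T ^ (1 - l) := by
        rw [← ENNReal.rpow_add l (1 - l) hT0 hTtop]
        norm_num
      have h1 : T ^ l < f x ^ l := ENNReal.rpow_lt_rpow hx hl0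
      have h2 : T ^ (1 - l) < g y ^ (1 - l) := ENNReal.rpow_lt_rpow hy hl1'
      have hprod : T < f x ^ l * g y ^ (1 - l) := by
        rw [hTsplit]
        exact ENNReal.mul_lt_mul h1 h2
      exact lt_of_lt_of_le hprod (hyp x y)
    · have hA0 : A t = 0 := by
        rw [hA]
        have : {a | ENNReal.ofReal t < f a ∧ t < 1} = ∅ :=
          eq_empty_of_forall_notMem fun a ha => absurd ha.2 (not_lt.2 ht1)
        simp [this]
      have hB0 : B t = 0 := by
        rw [hB]
        have : {a | ENNReal.ofReal t < g a ∧ t < 1} = ∅ :=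
          eq_empty_of_forall_notMem fun a ha => absurd ha.2 (not_lt.2 ht1)
        simp [this]
      simp [hA0, hB0]
  calc ENNReal.ofReal l * (∫⁻ x, f x) + ENNReal.ofReal (1 - l) * (∫⁻ x, g x)
      = ENNReal.ofReal l * (∫⁻ t in Ioi (0:ℝ), A t)
        + ENNReal.ofReal (1 - l) * (∫⁻ t in Ioi (0:ℝ), B t) := by
        rw [ef, eg, lintegral_cap_layercake hf, lintegral_cap_layercake hg]
    _ = (∫⁻ t in Ioi (0:ℝ), ENNReal.ofReal l * A t)
        + ∫⁻ t in Ioi (0:ℝ), ENNReal.ofReal (1 - l) * B t := by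
        rw [lintegral_const_mul' _ _ ENNReal.ofReal_ne_top,
          lintegral_const_mul' _ _ ENNReal.ofReal_ne_top]
    _ ≤ ∫⁻ t in Ioi (0:ℝ), (ENNReal.ofReal l * A t + ENNReal.ofReal (1 - l) * B t) :=
        le_lintegral_add _ _
    _ ≤ ∫⁻ t in Ioi (0:ℝ), C t := by
        refine lintegral_mono_ae ((ae_restrict_iff' measurableSet_Ioi).2 ?_)
        exact ae_of_all _ key
    _ = ∫⁻ x, min (h x) 1 := (lintegral_cap_layercake hh).symm
    _ ≤ ∫⁻ x, h x := eh

end PLcore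

section PLmain
open Filter

def IsPLMeasure {α : Type*} [MeasurableSpace α] [AddCommMonoid α] [Module ℝ α]
    (μ : Measure α) : Prop :=
  ∀ l : ℝ, 0 < l → l < 1 → ∀ f g h : α → ℝ≥0∞, Measurable f → Measurable g → Measurable h →
    (∀ x y, f x ^ l * g y ^ (1 - l) ≤ h (l • x + (1 - l) • y)) →
    (∫⁻ x, f x ∂μ) ^ l * (∫⁻ x, g x ∂μ) ^ (1 - l) ≤ ∫⁻ x, h x ∂μ

lemma pl_limit_helper {l : ℝ} (hl0 : 0 < l) (hl1 : l < 1) {F G H : ℝ≥0∞}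
    {fN gN : ℕ → ℝ≥0∞} (hfm : Monotone fN) (hgm : Monotone gN)
    (hF : (⨆ N, fN N) = F) (hG : (⨆ N, gN N) = G)
    (h : ∀ N, fN N ^ l * gN N ^ (1 - l) ≤ H) : F ^ l * G ^ (1 - l) ≤ H := by
  have c1 : Continuous (fun x : ℝ≥0∞ => x ^ l) := ENNReal.continuous_rpow_const
  have c2 : Continuous (fun x : ℝ≥0∞ => x ^ (1 - l)) := ENNReal.continuous_rpow_const
  have hFl : F ^ l = ⨆ N, fN N ^ l := by
    rw [← hF]
    exact Monotone.map_iSup_of_continuousAt c1.continuousAt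
      (fun a b hab => ENNReal.rpow_le_rpow hab hl0.le) (by simp [ENNReal.zero_rpow_of_pos hl0])
  have hGl : G ^ (1 - l) = ⨆ N, gN N ^ (1 - l) := by
    rw [← hG]
    exact Monotone.map_iSup_of_continuousAt c2.continuousAt
      (fun a b hab => ENNReal.rpow_le_rpow hab (by linarith))
      (by simp [ENNReal.zero_rpow_of_pos (by linarith : (0:ℝ) < 1 - l)])
  rw [hFl, hGl, ENNReal.iSup_mul]
  refine iSup_le fun i => ?_
  rw [ENNReal.mul_iSup]
  refine iSup_le fun j => ?_
  refine le_trans ?_ (h (max i j))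
  exact mul_le_mul' (ENNReal.rpow_le_rpow (hfm (le_max_left i j)) hl0.le)
    (ENNReal.rpow_le_rpow (hgm (le_max_right i j)) (by linarith))

lemma isPL_real : IsPLMeasure (volume : Measure ℝ) := by
  intro l hl0 hl1 f g h hf hg hh hyp
  have hl1' : (0:ℝ) < 1 - l := by linarith
  simp only [smul_eq_mul] at hyp
  rcases eq_or_ne (∫⁻ x, f x) 0 with hf0 | hf0
  · rw [hf0, ENNReal.zero_rpow_of_pos hl0, zero_mul]; exact zero_le
  rcases eq_or_ne (∫⁻ x, g x) 0 with hg0 | hg0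
  · rw [hg0, ENNReal.zero_rpow_of_pos hl1', mul_zero]; exact zero_le
  have hmono : ∀ (φ : ℝ → ℝ≥0∞), Monotone (fun N : ℕ => ∫⁻ x, min (φ x) N) := by
    intro φ i j hij
    exact lintegral_mono fun x => min_le_min le_rfl (by exact_mod_cast hij)
  have hsup : ∀ (φ : ℝ → ℝ≥0∞), Measurable φ → (⨆ N : ℕ, ∫⁻ x, min (φ x) N) = ∫⁻ x, φ x := by
    intro φ hφ
    rw [← lintegral_iSup (fun N => hφ.min measurable_const)]
    · refine lintegral_congr fun x => ?_
      rw [← inf_iSup_eq]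
      simp [ENNReal.iSup_natCast]
    · intro i j hij
      exact fun x => min_le_min le_rfl (by exact_mod_cast hij)
  have key : ∀ N : ℕ, (∫⁻ x, min (f x) N) ^ l * (∫⁻ x, min (g x) N) ^ (1 - l) ≤ ∫⁻ x, h x := by
    intro N
    rcases Nat.eq_zero_or_pos N with rfl | hN
    · simp [ENNReal.zero_rpow_of_pos hl0]
    set cf := essSup (fun x => min (f x) N) volume with hcf
    set cg := essSup (fun x => min (g x) N) volume with hcg
    have hcf_le : cf ≤ N := essSup_le_of_ae_le _ (ae_of_all _ fun x => min_le_right _ _)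
    have hcg_le : cg ≤ N := essSup_le_of_ae_le _ (ae_of_all _ fun x => min_le_right _ _)
    have hcf_top : cf ≠ ∞ := (lt_of_le_of_lt hcf_le (ENNReal.natCast_lt_top N)).ne
    have hcg_top : cg ≠ ∞ := (lt_of_le_of_lt hcg_le (ENNReal.natCast_lt_top N)).ne
    have hmin_zero : ∀ (a : ℝ≥0∞), min a (N:ℝ≥0∞) = 0 → a = 0 := by
      intro a ha
      rcases min_eq_iff.mp ha with ⟨h1, _⟩ | ⟨h1, _⟩
      · exact h1
      · exact absurd h1 (by exact_mod_cast Nat.one_le_iff_ne_zero.mp hN)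
    have hcf0 : cf ≠ 0 := by
      intro h0
      refine hf0 ?_
      have h1 : ∀ᵐ x, min (f x) N ≤ cf := ENNReal.ae_le_essSup _
      rw [h0] at h1
      refine lintegral_eq_zero_iff hf |>.2 ?_
      filter_upwards [h1] with x hx
      exact hmin_zero _ (le_zero_iff.mp hx)
    have hcg0 : cg ≠ 0 := by
      intro h0
      refine hg0 ?_
      have h1 : ∀ᵐ x, min (g x) N ≤ cg := ENNReal.ae_le_essSup _
      rw [h0] at h1
      refine lintegral_eq_zero_iff hg |>.2 ?_
      filter_upwards [h1] with x hx
      exact hmin_zero _ (le_zero_iff.mp hx)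
    set K := cf ^ l * cg ^ (1 - l) with hK
    have hcfl0 : cf ^ l ≠ 0 := by simp [ENNReal.rpow_eq_zero_iff, hcf0, hcf_top]
    have hcfltop : cf ^ l ≠ ∞ := ENNReal.rpow_ne_top_of_nonneg hl0.le hcf_top
    have hcgl0 : cg ^ (1 - l) ≠ 0 := by simp [ENNReal.rpow_eq_zero_iff, hcg0, hcg_top]
    have hcgltop : cg ^ (1 - l) ≠ ∞ := ENNReal.rpow_ne_top_of_nonneg hl1'.le hcg_top
    have hK0 : K ≠ 0 := mul_ne_zero hcfl0 hcgl0
    have hKtop : K ≠ ∞ := ENNReal.mul_ne_top hcfltop hcgltop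
    have hKinv : K⁻¹ = (cf ^ l)⁻¹ * (cg ^ (1 - l))⁻¹ :=
      ENNReal.mul_inv (Or.inl hcfl0) (Or.inl hcfltop)
    set f' : ℝ → ℝ≥0∞ := fun x => cf⁻¹ * min (f x) N with hf'
    set g' : ℝ → ℝ≥0∞ := fun x => cg⁻¹ * min (g x) N with hg'
    set h' : ℝ → ℝ≥0∞ := fun x => K⁻¹ * h x with hh'
    have hf'm : Measurable f' := (hf.min measurable_const).const_mul _
    have hg'm : Measurable g' := (hg.min measurable_const).const_mul _
    have hh'm : Measurable h' := hh.const_mul _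
    have hef' : essSup f' volume = 1 := by
      rw [hf', essSup_const_mul, ← hcf]
      exact ENNReal.inv_mul_cancel hcf0 hcf_top
    have heg' : essSup g' volume = 1 := by
      rw [hg', essSup_const_mul, ← hcg]
      exact ENNReal.inv_mul_cancel hcg0 hcg_top
    have hyp' : ∀ x y, f' x ^ l * g' y ^ (1 - l) ≤ h' (l * x + (1 - l) * y) := by
      intro x y
      have e1 : f' x ^ l * g' y ^ (1 - l)
          = K⁻¹ * (min (f x) N ^ l * min (g y) N ^ (1 - l)) := by
        rw [hf', hg', ENNReal.mul_rpow_of_nonneg _ _ hl0.le,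
          ENNReal.mul_rpow_of_nonneg _ _ hl1'.le, ENNReal.inv_rpow, ENNReal.inv_rpow, hKinv]
        ring
      rw [e1, hh']
      refine mul_le_mul_right ?_ _
      refine le_trans ?_ (hyp x y)
      exact mul_le_mul' (ENNReal.rpow_le_rpow (min_le_left _ _) hl0.le)
        (ENNReal.rpow_le_rpow (min_le_left _ _) hl1'.le)
    have hcore := PL_core hl0 hl1 hf'm hg'm hh'm hef' heg' hyp'
    have hgm := ennreal_geom_mean_le hl0 hl1 (∫⁻ x, f' x) (∫⁻ x, g' x)
    have hmain : (∫⁻ x, f' x) ^ l * (∫⁻ x, g' x) ^ (1 - l) ≤ ∫⁻ x, h' x :=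
      le_trans hgm hcore
    have e2 : (∫⁻ x, f' x) = cf⁻¹ * ∫⁻ x, min (f x) N := by
      rw [hf']; exact lintegral_const_mul' _ _ (by simp [hcf0])
    have e3 : (∫⁻ x, g' x) = cg⁻¹ * ∫⁻ x, min (g x) N := by
      rw [hg']; exact lintegral_const_mul' _ _ (by simp [hcg0])
    have e4 : (∫⁻ x, h' x) = K⁻¹ * ∫⁻ x, h x := by
      rw [hh']; exact lintegral_const_mul' _ _ (by simp [hK0])
    rw [e2, e3, e4, ENNReal.mul_rpow_of_nonneg _ _ hl0.le,
      ENNReal.mul_rpow_of_nonneg _ _ hl1'.le, ENNReal.inv_rpow, ENNReal.inv_rpow] at hmain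
    have e5 : (cf ^ l)⁻¹ * (∫⁻ x, min (f x) N) ^ l * ((cg ^ (1 - l))⁻¹ *
        (∫⁻ x, min (g x) N) ^ (1 - l))
        = K⁻¹ * ((∫⁻ x, min (f x) N) ^ l * (∫⁻ x, min (g x) N) ^ (1 - l)) := by
      rw [hKinv]; ring
    rw [e5] at hmain
    have hKinv0 : K⁻¹ ≠ 0 := ENNReal.inv_ne_zero.2 hKtop
    have hKinvtop : K⁻¹ ≠ ∞ := ENNReal.inv_ne_top.2 hK0
    exact (ENNReal.mul_le_mul_iff_right hKinv0 hKinvtop).mp hmain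
  exact pl_limit_helper hl0 hl1 (hmono f) (hmono g) (hsup f hf) (hsup g hg) key

lemma isPL_prod {α β : Type*} [MeasurableSpace α] [MeasurableSpace β]
    [AddCommMonoid α] [Module ℝ α] [AddCommMonoid β] [Module ℝ β]
    {μ : Measure α} {ν : Measure β} [SFinite ν]
    (hμ : IsPLMeasure μ) (hν : IsPLMeasure ν) : IsPLMeasure (μ.prod ν) := by
  intro l hl0 hl1 f g h hf hg hh hyp
  set F : α → ℝ≥0∞ := fun a => ∫⁻ b, f (a, b) ∂ν with hF
  set G : α → ℝ≥0∞ := fun a => ∫⁻ b, g (a, b) ∂ν with hG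
  set H : α → ℝ≥0∞ := fun a => ∫⁻ b, h (a, b) ∂ν with hH
  have hFm : Measurable F := hf.lintegral_prod_right'
  have hGm : Measurable G := hg.lintegral_prod_right'
  have hHm : Measurable H := hh.lintegral_prod_right'
  have key : ∀ a₁ a₂, F a₁ ^ l * G a₂ ^ (1 - l) ≤ H (l • a₁ + (1 - l) • a₂) := by
    intro a₁ a₂
    refine hν l hl0 hl1 (fun b => f (a₁, b)) (fun b => g (a₂, b))
      (fun b => h (l • a₁ + (1 - l) • a₂, b))
      (hf.comp (measurable_prodMk_left)) (hg.comp (measurable_prodMk_left))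
      (hh.comp (measurable_prodMk_left)) ?_
    intro b₁ b₂
    simpa only [Prod.smul_mk, Prod.mk_add_mk] using hyp (a₁, b₁) (a₂, b₂)
  have hμres := hμ l hl0 hl1 F G H hFm hGm hHm key
  rw [lintegral_prod f hf.aemeasurable, lintegral_prod g hg.aemeasurable,
    lintegral_prod h hh.aemeasurable]
  exact hμres

lemma isPL_map {α β : Type*} [MeasurableSpace α] [MeasurableSpace β]
    [AddCommMonoid α] [Module ℝ α] [AddCommMonoid β] [Module ℝ β]
    {μ : Measure α} {ν : Measure β}
    (e : α ≃ᵐ β) (he : MeasurePreserving e μ ν)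
    (hlin : ∀ (l : ℝ) (x y : α), e (l • x + (1 - l) • y) = l • e x + (1 - l) • e y)
    (hμ : IsPLMeasure μ) : IsPLMeasure ν := by
  intro l hl0 hl1 f g h hf hg hh hyp
  have := hμ l hl0 hl1 (fun x => f (e x)) (fun x => g (e x)) (fun x => h (e x)) (hf.comp e.measurable)
    (hg.comp e.measurable) (hh.comp e.measurable) ?_
  · rwa [he.lintegral_comp hf, he.lintegral_comp hg, he.lintegral_comp hh] at this
  · intro x y
    show f (e x) ^ l * g (e y) ^ (1 - l) ≤ h (e (l • x + (1 - l) • y))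
    rw [hlin]
    exact hyp _ _

lemma isPL_pi : ∀ n : ℕ, IsPLMeasure (volume : Measure (Fin n → ℝ)) := by
  intro n
  induction n with
  | zero =>
    intro l hl0 hl1 f g h hf hg hh hyp
    have huniv : (volume : Measure (Fin 0 → ℝ)) univ = 1 := by
      rw [volume_pi, Measure.pi_univ]; simp
    rw [lintegral_unique f, lintegral_unique g, lintegral_unique h, huniv]
    simp only [mul_one]
    refine le_trans (le_of_eq ?_) (le_trans (hyp 0 0) (le_of_eq (congrArg h (Subsingleton.elim _ _))))
    rw [congrArg f (Subsingleton.elim _ (0 : Fin 0 → ℝ)),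
      congrArg g (Subsingleton.elim _ (0 : Fin 0 → ℝ))]
  | succ n ih =>
    have hprod : IsPLMeasure ((volume : Measure ℝ).prod (volume : Measure (Fin n → ℝ))) :=
      isPL_prod isPL_real ih
    have hmp : MeasurePreserving (MeasurableEquiv.piFinSuccAbove (fun _ : Fin (n+1) => ℝ) 0)
        (volume : Measure (Fin (n+1) → ℝ))
        ((volume : Measure ℝ).prod (volume : Measure (Fin n → ℝ))) := by
      have := measurePreserving_piFinSuccAbove (fun _ : Fin (n+1) => (volume : Measure ℝ)) 0
      simpa [volume_pi] using this
    refine isPL_map (MeasurableEquiv.piFinSuccAbove (fun _ : Fin (n+1) => ℝ) 0).symm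
      hmp.symm ?_ hprod
    intro l x y
    have hfwd : ∀ (l : ℝ) (x y : Fin (n+1) → ℝ),
        (MeasurableEquiv.piFinSuccAbove (fun _ : Fin (n+1) => ℝ) 0) (l • x + (1-l) • y)
        = l • (MeasurableEquiv.piFinSuccAbove (fun _ : Fin (n+1) => ℝ) 0) x
          + (1-l) • (MeasurableEquiv.piFinSuccAbove (fun _ : Fin (n+1) => ℝ) 0) y := by
      intro l x y
      ext <;> simp [MeasurableEquiv.piFinSuccAbove, Fin.insertNthEquiv, Fin.tail]
    set E := MeasurableEquiv.piFinSuccAbove (fun _ : Fin (n+1) => ℝ) 0 with hE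
    apply E.injective
    rw [E.apply_symm_apply, hfwd, E.apply_symm_apply, E.apply_symm_apply]

lemma isPL_euclidean (n : ℕ) : IsPLMeasure (volume : Measure (EuclideanSpace ℝ (Fin n))) := by
  refine isPL_map ((MeasurableEquiv.toLp 2 (Fin n → ℝ)).symm).symm
    (EuclideanSpace.volume_preserving_symm_measurableEquiv_toLp (Fin n)).symm ?_ (isPL_pi n)
  intro l x y
  rfl

end PLmain

section LogConcaveDefs
open MeasureTheory ProbabilityTheory

/-- Squared 2-Wasserstein distance between two measures on `ℝⁿ`:
the infimum of `∫ ‖x - y‖²` over all couplings. -/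
noncomputable def W2sq {n : ℕ}
    (μ ν : Measure (EuclideanSpace ℝ (Fin n))) : ℝ :=
  sInf { c : ℝ | ∃ γ : Measure (EuclideanSpace ℝ (Fin n) × EuclideanSpace ℝ (Fin n)),
    γ.map Prod.fst = μ ∧ γ.map Prod.snd = ν ∧ c = ∫ p, ‖p.1 - p.2‖ ^ 2 ∂γ }

/-- A measure on `ℝⁿ` is log-concave if it has density `e^{-V} 1_S` with respect to the
Lebesgue measure, where `S` is a convex set and `V` is convex on `S`. -/
def IsLogConcaveMeasure {n : ℕ} (μ : Measure (EuclideanSpace ℝ (Fin n))) : Prop :=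
  ∃ (S : Set (EuclideanSpace ℝ (Fin n))) (V : EuclideanSpace ℝ (Fin n) → ℝ),
    Convex ℝ S ∧ ConvexOn ℝ S V ∧
    μ = volume.withDensity (S.indicator fun x => ENNReal.ofReal (Real.exp (-V x)))

/-- The measure `μ` conditioned on the closed ball of radius `R` centered at the origin. -/
noncomputable def condBall {n : ℕ} (μ : Measure (EuclideanSpace ℝ (Fin n))) (R : ℝ) :
    Measure (EuclideanSpace ℝ (Fin n)) :=
  (μ (Metric.closedBall 0 R))⁻¹ • μ.restrict (Metric.closedBall 0 R)

end LogConcaveDefs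

section LogConcaveCombo

lemma measurable_indicator_of_continuousOn {X : Type*} [TopologicalSpace X] [MeasurableSpace X]
    [OpensMeasurableSpace X] {f : X → ℝ≥0∞} {U : Set X} (hU : IsOpen U)
    (hf : ContinuousOn f U) : Measurable (U.indicator f) := by
  classical
  refine measurable_of_isOpen fun t ht => ?_
  have : (U.indicator f) ⁻¹' t
      = (U ∩ f ⁻¹' t) ∪ (Uᶜ ∩ (if (0:ℝ≥0∞) ∈ t then univ else ∅)) := by
    ext x
    by_cases hx : x ∈ U <;> by_cases h0 : (0:ℝ≥0∞) ∈ t <;>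
      simp [indicator_apply, hx, h0]
  rw [this]
  refine MeasurableSet.union ((hf.isOpen_inter_preimage hU ht).measurableSet) ?_
  exact (hU.isClosed_compl.measurableSet).inter (by split <;> simp)

lemma logconcave_combo {n : ℕ} {μ : Measure (EuclideanSpace ℝ (Fin n))}
    (hlc : IsLogConcaveMeasure μ) {l : ℝ} (hl0 : 0 < l) (hl1 : l < 1)
    {A B C : Set (EuclideanSpace ℝ (Fin n))} (hA : MeasurableSet A) (hB : MeasurableSet B)
    (hC : MeasurableSet C) (hsub : ∀ x ∈ A, ∀ y ∈ B, l • x + (1 - l) • y ∈ C) :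
    μ A ^ l * μ B ^ (1 - l) ≤ μ C := by
  obtain ⟨S, V, hS, hV, hμ⟩ := hlc
  have hl1' : (0:ℝ) < 1 - l := by linarith
  set U := interior S with hU
  have hUopen : IsOpen U := isOpen_interior
  have hUconv : Convex ℝ U := hS.interior
  have hVU : ConvexOn ℝ U V := hV.subset interior_subset hUconv
  have hVcont : ContinuousOn V U := hVU.continuousOn hUopen
  set ρ : EuclideanSpace ℝ (Fin n) → ℝ≥0∞ :=
    U.indicator (fun x => ENNReal.ofReal (Real.exp (-V x))) with hρ
  have hρm : Measurable ρ :=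
    measurable_indicator_of_continuousOn hUopen
      (ENNReal.continuous_ofReal.comp_continuousOn
        (Real.continuous_exp.comp_continuousOn hVcont.neg))
  have hae : (S.indicator fun x => ENNReal.ofReal (Real.exp (-V x))) =ᵐ[volume] ρ := by
    have hnull : volume (S \ U) = 0 :=
      measure_mono_null (show S \ U ⊆ frontier S from fun x hx => ⟨subset_closure hx.1, hx.2⟩) (hS.addHaar_frontier volume)
    refine (measure_mono_null ?_ hnull : volume _ = 0)
    intro x hx
    simp only [mem_setOf_eq] at hx
    by_cases hxU : x ∈ U
    · exact absurd (by simp [indicator_apply, hxU, interior_subset hxU, hρ]) hx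
    by_cases hxS : x ∈ S
    · exact ⟨hxS, hxU⟩
    · exact absurd (by simp [indicator_apply, hxU, hxS, hρ]) hx
  have hμρ : μ = volume.withDensity ρ := by rw [hμ]; exact withDensity_congr_ae hae
  have happ : ∀ D : Set (EuclideanSpace ℝ (Fin n)), MeasurableSet D →
      μ D = ∫⁻ x, D.indicator ρ x := by
    intro D hD
    rw [hμρ, withDensity_apply _ hD, lintegral_indicator hD]
  rw [happ A hA, happ B hB, happ C hC]
  refine isPL_euclidean n l hl0 hl1 _ _ _ (hρm.indicator hA) (hρm.indicator hB)
    (hρm.indicator hC) ?_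
  intro x y
  by_cases hx : x ∈ A
  swap
  · simp [indicator_apply, hx, ENNReal.zero_rpow_of_pos hl0]
  by_cases hy : y ∈ B
  swap
  · simp [indicator_apply, hy, ENNReal.zero_rpow_of_pos hl1']
  rw [indicator_of_mem hx, indicator_of_mem hy,
    indicator_of_mem (hsub x hx y hy)]
  by_cases hxU : x ∈ U
  swap
  · rw [hρ, indicator_of_notMem hxU, ENNReal.zero_rpow_of_pos hl0, zero_mul]
    exact zero_le
  by_cases hyU : y ∈ U
  swap
  · rw [hρ, indicator_of_notMem hyU, ENNReal.zero_rpow_of_pos hl1', mul_zero]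
    exact zero_le
  have hzU : l • x + (1 - l) • y ∈ U := hUconv hxU hyU hl0.le hl1'.le (by ring)
  rw [hρ, indicator_of_mem hxU, indicator_of_mem hyU, indicator_of_mem hzU]
  have hVz : V (l • x + (1 - l) • y) ≤ l * V x + (1 - l) * V y :=
    hV.2 (interior_subset hxU) (interior_subset hyU) hl0.le hl1'.le (by ring)
  calc ENNReal.ofReal (Real.exp (-V x)) ^ l * ENNReal.ofReal (Real.exp (-V y)) ^ (1 - l)
      = ENNReal.ofReal (Real.exp (-V x) ^ l * Real.exp (-V y) ^ (1 - l)) := by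
        rw [ENNReal.ofReal_rpow_of_nonneg (Real.exp_nonneg _) hl0.le,
          ENNReal.ofReal_rpow_of_nonneg (Real.exp_nonneg _) hl1'.le,
          ENNReal.ofReal_mul (Real.rpow_nonneg (Real.exp_nonneg _) _)]
    _ ≤ ENNReal.ofReal (Real.exp (-V (l • x + (1 - l) • y))) := by
        refine ENNReal.ofReal_le_ofReal ?_
        rw [Real.rpow_def_of_pos (Real.exp_pos _), Real.log_exp,
          Real.rpow_def_of_pos (Real.exp_pos _), Real.log_exp, ← Real.exp_add]
        refine Real.exp_le_exp.2 ?_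
        nlinarith [hVz]

end LogConcaveCombo

section Borell
open Metric

lemma borell_tail {n : ℕ} {μ : Measure (EuclideanSpace ℝ (Fin n))} [IsProbabilityMeasure μ]
    (hlc : IsLogConcaveMeasure μ) {r : ℝ} (hr : 0 < r)
    (hball : (μ (Metric.closedBall 0 r)ᶜ).toReal ≤ 1/4) (k : ℕ) :
    (μ (Metric.closedBall 0 (k * r))ᶜ).toReal ≤ (1/3 : ℝ) ^ ((k:ℝ)/2) := by
  have hfin : ∀ s : Set (EuclideanSpace ℝ (Fin n)), μ s ≠ ∞ :=
    fun s => (measure_lt_top μ s).ne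
  have hone13 : (0:ℝ) < 1/3 := by norm_num
  have h14_le : (1/4 : ℝ) ≤ (1/3) ^ ((1:ℝ)/2) := by
    have h := Real.rpow_le_rpow (by norm_num : (0:ℝ) ≤ 1/16) (by norm_num : (1/16:ℝ) ≤ 1/3)
      (by norm_num : (0:ℝ) ≤ 1/2)
    calc (1/4 : ℝ) = (1/16) ^ ((1:ℝ)/2) := by
          rw [show (1/16 : ℝ) = (1/4)^(2:ℕ) by norm_num, ← Real.rpow_natCast ((1:ℝ)/4) 2,
            ← Real.rpow_mul (by norm_num)]
          norm_num
      _ ≤ (1/3) ^ ((1:ℝ)/2) := h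
  -- trivial bound for any set
  have htriv : ∀ s : Set (EuclideanSpace ℝ (Fin n)), (μ s).toReal ≤ 1 := by
    intro s
    rw [← ENNReal.toReal_one]
    exact ENNReal.toReal_mono one_ne_top prob_le_one
  match k with
  | 0 => simpa using htriv _
  | 1 =>
    refine le_trans (by simpa using hball) ?_
    simpa using h14_le
  | (m+2) =>
    set k : ℕ := m + 2 with hk
    have hk2 : (2:ℝ) ≤ (k:ℝ) := by exact_mod_cast Nat.le_add_left 2 m
    set l : ℝ := 2 / (k + 1) with hl
    have hkpos : (0:ℝ) < k + 1 := by linarith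
    have hl0 : 0 < l := by positivity
    have hl1 : l < 1 := by
      rw [hl, div_lt_one hkpos]; linarith
    set A := (Metric.closedBall (0 : EuclideanSpace ℝ (Fin n)) (k * r))ᶜ with hA
    set B := Metric.closedBall (0 : EuclideanSpace ℝ (Fin n)) r with hB
    have hsub : ∀ x ∈ A, ∀ y ∈ B, l • x + (1 - l) • y ∈ Bᶜ := by
      intro x hx y hy
      have hx' : k * r < ‖x‖ := by
        simpa [hA, mem_closedBall, dist_zero_right, not_le] using hx
      have hy' : ‖y‖ ≤ r := by
        simpa [hB, mem_closedBall, dist_zero_right] using hy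
      simp only [mem_compl_iff, hB, mem_closedBall, dist_zero_right, not_le]
      have h1 : ‖l • x‖ ≤ ‖l • x + (1 - l) • y‖ + ‖(1 - l) • y‖ := by
        have := norm_sub_le (l • x + (1 - l) • y) ((1 - l) • y)
        simpa using this
      rw [norm_smul, norm_smul] at h1
      simp only [Real.norm_eq_abs, abs_of_pos hl0, abs_of_pos (by linarith : (0:ℝ) < 1 - l)]
        at h1
      have hlx : l * (k * r) < l * ‖x‖ := by
        exact mul_lt_mul_of_pos_left hx' hl0
      have hly : (1 - l) * ‖y‖ ≤ (1 - l) * r := by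
        exact mul_le_mul_of_nonneg_left hy' (by linarith)
      have hcalc : l * (k * r) - (1 - l) * r = r := by
        rw [hl]; field_simp; ring
      nlinarith
    have hcombo := logconcave_combo hlc hl0 hl1
      (measurableSet_closedBall.compl) measurableSet_closedBall
      (measurableSet_closedBall.compl) hsub
    -- pass to real numbers
    set pA := (μ A).toReal with hpA
    set pB := (μ B).toReal with hpB
    set pC := (μ Bᶜ).toReal with hpC
    have hreal : pA ^ l * pB ^ (1 - l) ≤ pC := by
      have := ENNReal.toReal_mono (hfin _) hcombo
      rwa [ENNReal.toReal_mul, ← ENNReal.toReal_rpow, ← ENNReal.toReal_rpow] at this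
    have hpC14 : pC ≤ 1/4 := hball
    have hpB34 : 3/4 ≤ pB := by
      have hadd : μ B + μ Bᶜ = 1 := by
        rw [← measure_univ (μ := μ)]
        exact measure_add_measure_compl measurableSet_closedBall
      have : pB + pC = 1 := by
        rw [hpB, hpC, ← ENNReal.toReal_add (hfin _) (hfin _), hadd, ENNReal.toReal_one]
      linarith
    have hpA0 : 0 ≤ pA := ENNReal.toReal_nonneg
    have hpBl : (3/4 : ℝ) ≤ pB ^ (1 - l) := by
      calc (3/4 : ℝ) = (3/4) ^ (1:ℝ) := by rw [Real.rpow_one]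
        _ ≤ (3/4) ^ (1 - l) := Real.rpow_le_rpow_of_exponent_ge (by norm_num) (by norm_num)
            (by linarith)
        _ ≤ pB ^ (1 - l) := Real.rpow_le_rpow (by norm_num) hpB34 (by linarith)
    have hstep : pA ^ l * (3/4) ≤ 1/4 := by
      calc pA ^ l * (3/4) ≤ pA ^ l * pB ^ (1 - l) :=
            mul_le_mul_of_nonneg_left hpBl (Real.rpow_nonneg hpA0 l)
        _ ≤ pC := hreal
        _ ≤ 1/4 := hpC14
    have hpAl : pA ^ l ≤ 1/3 := by nlinarith [Real.rpow_nonneg hpA0 l]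
    have hinv : l * ((k + 1 : ℝ)/2) = 1 := by
      rw [hl]; field_simp
    have hfinal : pA ≤ (1/3 : ℝ) ^ ((k + 1 : ℝ)/2) := by
      have h1 : pA = (pA ^ l) ^ ((k + 1 : ℝ)/2) := by
        rw [← Real.rpow_mul hpA0, hinv, Real.rpow_one]
      rw [h1]
      exact Real.rpow_le_rpow (Real.rpow_nonneg hpA0 l) hpAl (by positivity)
    refine hfinal.trans ?_
    exact Real.rpow_le_rpow_of_exponent_ge hone13 (by norm_num) (by linarith)
end Borell

section Final
open Metric

set_option maxHeartbeats 2000000 in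
/-- **Reverse Hölder / Borell moment comparison for log-concave measures.**
There is a universal constant `C > 0` such that every log-concave probability measure `μ`
on `ℝⁿ` satisfies `∫ ‖x‖⁴ dμ ≤ C (∫ ‖x‖² dμ)²`. -/
theorem fourth_moment_le_sq_second_moment :
    ∃ C : ℝ, 0 < C ∧
      ∀ (n : ℕ), 1 ≤ n →
        ∀ μ : Measure (EuclideanSpace ℝ (Fin n)), IsProbabilityMeasure μ →
          IsLogConcaveMeasure μ →
          (∫ x, ‖x‖ ^ 4 ∂μ) ≤ C * (∫ x, ‖x‖ ^ 2 ∂μ) ^ 2 := by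
  classical
  set q : ℝ := (1/3 : ℝ) ^ ((1:ℝ)/2) with hq
  have hq0 : 0 < q := Real.rpow_pos_of_pos (by norm_num) _
  have hq1 : q < 1 := Real.rpow_lt_one (by norm_num) (by norm_num) (by norm_num)
  have hqhalf : (1/2 : ℝ) ≤ q := by
    have h := Real.rpow_le_rpow (by norm_num : (0:ℝ) ≤ 1/4) (by norm_num : (1/4:ℝ) ≤ 1/3)
      (by norm_num : (0:ℝ) ≤ 1/2)
    calc (1/2 : ℝ) = (1/4) ^ ((1:ℝ)/2) := by
          rw [show (1/4 : ℝ) = (1/2)^(2:ℕ) by norm_num, ← Real.rpow_natCast ((1:ℝ)/2) 2,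
            ← Real.rpow_mul (by norm_num)]
          norm_num
      _ ≤ q := h
  have hsummable : Summable (fun k : ℕ => ((k:ℝ)+1)^4 * q ^ k) := by
    have h0 : Summable (fun k : ℕ => (k:ℝ)^4 * q ^ k) :=
      summable_pow_mul_geometric_of_norm_lt_one 4
        (by rw [Real.norm_eq_abs, abs_of_pos hq0]; exact hq1)
    have h1 : Summable (fun k : ℕ => ((k+1:ℕ):ℝ)^4 * q ^ (k+1)) :=
      (summable_nat_add_iff 1).2 h0
    refine (h1.mul_right q⁻¹).congr fun k => ?_
    push_cast
    rw [pow_succ]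
    field_simp
    ring
  set T : ℝ := ∑' k : ℕ, ((k:ℝ)+1)^4 * q ^ k with hT
  have hT0 : 0 ≤ T := tsum_nonneg fun k => by positivity
  refine ⟨32 * T + 1, by positivity, ?_⟩
  intro n hn μ hprob hlc
  by_cases hint : Integrable (fun x : EuclideanSpace ℝ (Fin n) => ‖x‖ ^ 4) μ
  swap
  · rw [integral_undef hint]
    positivity
  have hint2 : Integrable (fun x : EuclideanSpace ℝ (Fin n) => ‖x‖ ^ 2) μ := by
    refine Integrable.mono' ((integrable_const (1:ℝ)).add hint)
      ((continuous_norm.pow 2).aestronglyMeasurable) (ae_of_all _ fun x => ?_)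
    have h4 : (0:ℝ) ≤ ‖x‖ := norm_nonneg x
    rw [Real.norm_eq_abs, abs_of_nonneg (by positivity), Pi.add_apply]
    nlinarith [sq_nonneg (‖x‖^2 - 1)]
  have hfin : ∀ s : Set (EuclideanSpace ℝ (Fin n)), μ s ≠ ∞ :=
    fun s => (measure_lt_top μ s).ne
  set M₂ : ℝ≥0∞ := ∫⁻ x, ENNReal.ofReal (‖x‖^2) ∂μ with hM₂
  have hmeas2 : Measurable fun x : EuclideanSpace ℝ (Fin n) => ENNReal.ofReal (‖x‖^2) :=
    ENNReal.measurable_ofReal.comp ((continuous_norm.pow 2).measurable)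
  have hM₂top : M₂ ≠ ∞ := by
    have hfi := hint2.hasFiniteIntegral
    rw [hasFiniteIntegral_iff_norm] at hfi
    rw [hM₂]
    refine ne_of_lt (lt_of_le_of_lt (lintegral_mono fun x => ?_) hfi)
    exact ENNReal.ofReal_le_ofReal (le_abs_self _)
  have hm_eq : (∫ x, ‖x‖^2 ∂μ) = M₂.toReal := by
    rw [hM₂, integral_eq_lintegral_of_nonneg_ae (f := fun x => ‖x‖ ^ 2) (ae_of_all _ fun x => by positivity)
      ((continuous_norm.pow 2).aestronglyMeasurable)]
  have habs : μ ≪ volume := by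
    obtain ⟨S, V, _, _, hμ⟩ := hlc
    rw [hμ]
    exact withDensity_absolutelyContinuous _ _
  have hvol0 : volume ({0} : Set (EuclideanSpace ℝ (Fin n))) = 0 := by
    have hmp := EuclideanSpace.volume_preserving_symm_measurableEquiv_toLp (Fin n)
    have h0 : ({0} : Set (EuclideanSpace ℝ (Fin n)))
        = ((MeasurableEquiv.toLp 2 (Fin n → ℝ)).symm) ⁻¹' {0} := by
      ext x
      simp only [mem_singleton_iff, mem_preimage]
      constructor
      · rintro rfl; rfl
      · intro h; exact ((MeasurableEquiv.toLp 2 (Fin n → ℝ)).symm).injective h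
    rw [h0, hmp.measure_preimage (measurableSet_singleton _).nullMeasurableSet]
    have h1 : ({0} : Set (Fin n → ℝ)) = Set.univ.pi fun _ => ({0} : Set ℝ) := by
      ext x
      simp [funext_iff]
    rw [h1, volume_pi, Measure.pi_pi]
    simp only [measure_singleton]
    rw [Finset.prod_const, Finset.card_univ, Fintype.card_fin]
    exact zero_pow (by omega : n ≠ 0)
  have hM₂0 : M₂ ≠ 0 := by
    intro h0
    rw [hM₂, lintegral_eq_zero_iff hmeas2] at h0
    have hae : ∀ᵐ x ∂μ, x = 0 := by
      filter_upwards [h0] with x hx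
      simp only [Pi.zero_apply, ENNReal.ofReal_eq_zero] at hx
      have : ‖x‖ = 0 := by nlinarith [norm_nonneg x, sq_nonneg ‖x‖]
      exact norm_eq_zero.mp this
    have h1 : μ ({0}ᶜ : Set (EuclideanSpace ℝ (Fin n))) = 0 := by
      rw [ae_iff] at hae
      convert hae using 2
      ext; simp
    have h2 : μ ({0} : Set (EuclideanSpace ℝ (Fin n))) = 0 := habs hvol0
    have hcontra : (1:ℝ≥0∞) = 0 := by
      rw [← measure_univ (μ := μ), ← union_compl_self ({0} : Set (EuclideanSpace ℝ (Fin n)))]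
      exact le_antisymm (le_trans (measure_union_le _ _) (by rw [h1, h2]; simp)) zero_le
    simp at hcontra
  set m : ℝ := M₂.toReal with hm
  have hm0 : 0 < m := ENNReal.toReal_pos hM₂0 hM₂top
  set r : ℝ := 2 * Real.sqrt m with hr
  have hr0 : 0 < r := by positivity
  have hr2 : r^2 = 4 * m := by
    rw [hr, mul_pow, Real.sq_sqrt hm0.le]; ring
  have hcheb : μ (Metric.closedBall 0 r)ᶜ ≤ 1/4 := by
    have hsub : (Metric.closedBall (0 : EuclideanSpace ℝ (Fin n)) r)ᶜ
        ⊆ {x | ENNReal.ofReal (r^2) ≤ ENNReal.ofReal (‖x‖^2)} := by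
      intro x hx
      simp only [mem_compl_iff, mem_closedBall, dist_zero_right, not_le] at hx
      simp only [mem_setOf_eq]
      exact ENNReal.ofReal_le_ofReal (by nlinarith)
    have h1 := mul_meas_ge_le_lintegral₀ (μ := μ) hmeas2.aemeasurable (ENNReal.ofReal (r^2))
    have h2 : ENNReal.ofReal (r^2) * μ (Metric.closedBall 0 r)ᶜ ≤ M₂ :=
      le_trans (mul_le_mul_right (measure_mono hsub) _) h1
    have h3 : ENNReal.ofReal (r^2) = 4 * M₂ := by
      rw [hr2, ENNReal.ofReal_mul (by norm_num), hm, ENNReal.ofReal_toReal hM₂top]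
      norm_num
    rw [h3] at h2
    have h4 : (4:ℝ≥0∞) * M₂ ≠ 0 := by simp [hM₂0]
    have h5 : (4:ℝ≥0∞) * M₂ ≠ ∞ := ENNReal.mul_ne_top (by simp) hM₂top
    rw [mul_comm] at h2
    have h6 := (ENNReal.le_div_iff_mul_le (Or.inl h4) (Or.inl h5)).2 h2
    refine le_trans h6 (le_of_eq ?_)
    rw [ENNReal.div_eq_inv_mul, ENNReal.mul_inv (Or.inr hM₂top) (Or.inr hM₂0),
      show (4:ℝ≥0∞)⁻¹ * M₂⁻¹ * M₂ = (4:ℝ≥0∞)⁻¹ * (M₂⁻¹ * M₂) from mul_assoc _ _ _,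
      ENNReal.inv_mul_cancel hM₂0 hM₂top, mul_one, one_div]
  have hball : (μ (Metric.closedBall 0 r)ᶜ).toReal ≤ 1/4 := by
    refine le_trans (ENNReal.toReal_mono (by simp) hcheb) ?_
    simp [ENNReal.toReal_div]
  have htail : ∀ k : ℕ, μ (Metric.closedBall 0 ((k:ℝ) * r))ᶜ ≤ ENNReal.ofReal (q ^ k) := by
    intro k
    have h1 := borell_tail hlc hr0 hball k
    have h2 : (1/3 : ℝ) ^ ((k:ℝ)/2) = q ^ k := by
      rw [hq, ← Real.rpow_natCast ((1/3 : ℝ) ^ ((1:ℝ)/2)) k, ← Real.rpow_mul (by norm_num)]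
      congr 1
      ring
    rw [h2] at h1
    exact (ENNReal.le_ofReal_iff_toReal_le (hfin _) (by positivity)).2 h1
  set s : ℕ → Set (EuclideanSpace ℝ (Fin n)) :=
    fun k => {x | (k:ℝ) * r ≤ ‖x‖ ∧ ‖x‖ < ((k:ℝ)+1) * r} with hs
  have hsmeas : ∀ k, MeasurableSet (s k) := fun k =>
    (measurableSet_le measurable_const continuous_norm.measurable).inter
      (measurableSet_lt continuous_norm.measurable measurable_const)
  have hsdisj : Pairwise (Function.onFun Disjoint s) := by
    intro i j hij
    wlog hlt : i < j generalizing i j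
    · exact (this hij.symm (by omega)).symm
    refine Set.disjoint_left.2 fun x hxi hxj => ?_
    have h1 : ‖x‖ < ((i:ℝ)+1) * r := hxi.2
    have h2 : (j:ℝ) * r ≤ ‖x‖ := hxj.1
    have h3 : ((i:ℝ)+1) ≤ (j:ℝ) := by exact_mod_cast hlt
    nlinarith
  have hscover : (⋃ k, s k) = univ := by
    refine eq_univ_of_forall fun x => ?_
    have hnn : 0 ≤ ‖x‖ / r := by positivity
    refine mem_iUnion.2 ⟨⌊‖x‖ / r⌋₊, ?_, ?_⟩
    · rw [← le_div_iff₀ hr0]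
      exact Nat.floor_le hnn
    · rw [← div_lt_iff₀ hr0]
      exact Nat.lt_floor_add_one _
  have hshell_bound : ∀ k : ℕ, (∫⁻ x in s k, ENNReal.ofReal (‖x‖^4) ∂μ)
      ≤ ENNReal.ofReal (2 * r^4 * (((k:ℝ)+1)^4 * q ^ k)) := by
    intro k
    have hstep1 : (∫⁻ x in s k, ENNReal.ofReal (‖x‖^4) ∂μ)
        ≤ ENNReal.ofReal ((((k:ℝ)+1) * r)^4) * μ (s k) := by
      rw [← setLIntegral_const (s k) _]
      refine setLIntegral_mono' (hsmeas k) fun x hx => ?_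
      refine ENNReal.ofReal_le_ofReal ?_
      exact pow_le_pow_left₀ (norm_nonneg x) hx.2.le 4
    have hstep2 : μ (s k) ≤ ENNReal.ofReal (2 * q ^ k) := by
      match k with
      | 0 =>
        refine le_trans prob_le_one ?_
        rw [pow_zero, mul_one]
        exact ENNReal.one_le_ofReal.2 (by norm_num)
      | (j+1) =>
        have hsub : s (j+1) ⊆ (Metric.closedBall 0 ((j:ℝ) * r))ᶜ := by
          intro x hx
          simp only [mem_compl_iff, mem_closedBall, dist_zero_right, not_le]
          have h1 : ((j:ℝ)+1) * r ≤ ‖x‖ := by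
            have := hx.1
            push_cast at this
            linarith
          nlinarith
        refine le_trans (measure_mono hsub) (le_trans (htail j) ?_)
        refine ENNReal.ofReal_le_ofReal ?_
        have hpw : q ^ j * 1 ≤ q ^ j * (2 * q) :=
          mul_le_mul_of_nonneg_left (by linarith) (pow_nonneg hq0.le j)
        calc q ^ j = q ^ j * 1 := by ring
          _ ≤ q ^ j * (2 * q) := hpw
          _ = 2 * q ^ (j+1) := by ring
    calc (∫⁻ x in s k, ENNReal.ofReal (‖x‖^4) ∂μ)
        ≤ ENNReal.ofReal ((((k:ℝ)+1) * r)^4) * ENNReal.ofReal (2 * q ^ k) :=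
          le_trans hstep1 (mul_le_mul_right hstep2 _)
      _ = ENNReal.ofReal ((((k:ℝ)+1) * r)^4 * (2 * q ^ k)) :=
          (ENNReal.ofReal_mul (by positivity)).symm
      _ = ENNReal.ofReal (2 * r^4 * (((k:ℝ)+1)^4 * q ^ k)) := by
          congr 1
          ring
  have hlint : (∫⁻ x, ENNReal.ofReal (‖x‖^4) ∂μ) ≤ ENNReal.ofReal (2 * r^4 * T) := by
    have h1 : (∫⁻ x, ENNReal.ofReal (‖x‖^4) ∂μ)
        = ∑' k, ∫⁻ x in s k, ENNReal.ofReal (‖x‖^4) ∂μ := by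
      rw [← lintegral_iUnion hsmeas hsdisj, hscover, Measure.restrict_univ]
    rw [h1]
    refine le_trans (ENNReal.tsum_le_tsum hshell_bound) ?_
    rw [← ENNReal.ofReal_tsum_of_nonneg (fun k => by positivity)
      (hsummable.mul_left (2 * r^4))]
    refine ENNReal.ofReal_le_ofReal (le_of_eq ?_)
    rw [hT, ← tsum_mul_left]
  have hint4eq : (∫ x, ‖x‖^4 ∂μ) = (∫⁻ x, ENNReal.ofReal (‖x‖^4) ∂μ).toReal :=
    integral_eq_lintegral_of_nonneg_ae (ae_of_all _ fun x => by positivity)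
      ((continuous_norm.pow 4).aestronglyMeasurable)
  rw [hint4eq, hm_eq]
  have h2 : (∫⁻ x, ENNReal.ofReal (‖x‖^4) ∂μ).toReal ≤ 2 * r^4 * T := by
    refine le_trans (ENNReal.toReal_mono ENNReal.ofReal_ne_top hlint) ?_
    rw [ENNReal.toReal_ofReal (by positivity)]
  refine le_trans h2 ?_
  have hr4 : r^4 = 16 * m^2 := by
    have hrr : r^4 = (r^2)^2 := by ring
    rw [hrr, hr2]; ring
  rw [hr4]
  nlinarith [sq_nonneg m]
end Final
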